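/- For permutations u, w ∈ S_n, u →^k w (there exists an increasing k-chain from u to w, a chain of k-Bruhat covers along which the smaller swapped value strictly increases) if and only if w·w₀ →_{n-k} u·w₀ (there exists a chain of (n-k)-Bruhat covers from w·w₀ to u·w₀ in which the left swap positions a_1, …, a_{s-1} are pairwise distinct), where w₀ = [n, n-1, …, 1] is the longest element of S_n. -/

import Mathlib

/-- `w` has finitely many non-fixed points. -/
def FinSupp (w : Equiv.Perm ℤ) : Prop := {i : ℤ | w i ≠ i}.Finite

/-- Descent set of a permutation of ℤ. -/
def Des (w : Equiv.Perm ℤ) : Set ℤ := {i : ℤ | w (i + 1) < w i}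

/-- Number of inversions. -/
noncomputable def permLength (w : Equiv.Perm ℤ) : ℕ :=
  {p : ℤ × ℤ | p.1 < p.2 ∧ w p.2 < w p.1}.ncard

/-- Membership in `S_{[a,n]}`: all non-fixed points lie in `[a,n]`. -/
def InS (a n : ℤ) (w : Equiv.Perm ℤ) : Prop := ∀ i : ℤ, w i ≠ i → a ≤ i ∧ i ≤ n

/-- Cover relation of the `k`-Bruhat order. -/
def BCover (k : ℤ) (u w : Equiv.Perm ℤ) : Prop :=
  ∃ i j : ℤ, i ≤ k ∧ k < j ∧ w = u * Equiv.swap i j ∧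
    permLength w = permLength u + 1

/-- The `k`-Bruhat order: reflexive-transitive closure of the cover relation. -/
def kBruhat (k : ℤ) : Equiv.Perm ℤ → Equiv.Perm ℤ → Prop :=
  Relation.ReflTransGen (BCover k)

/-- There is an increasing `k`-chain from `u` to `w`. -/
def IncTo (k : ℤ) (u w : Equiv.Perm ℤ) : Prop :=
  ∃ (m : ℕ) (us : ℕ → Equiv.Perm ℤ) (ab : ℕ → ℤ × ℤ),
    us 0 = u ∧ us m = w ∧
    (∀ i < m, (ab i).1 ≤ k ∧ k < (ab i).2 ∧
      us (i + 1) = us i * Equiv.swap (ab i).1 (ab i).2 ∧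
      permLength (us (i + 1)) = permLength (us i) + 1) ∧
    (∀ i j : ℕ, i < j → j < m → us i (ab i).1 < us j (ab j).1)

/-- `fix_{(lo,hi]}(u,w) = {u(t) : lo < t ≤ hi, u(t) = w(t)}`. -/
def fixSet (lo hi : ℤ) (u w : Equiv.Perm ℤ) : Set ℤ :=
  {m : ℤ | ∃ t : ℤ, lo < t ∧ t ≤ hi ∧ u t = m ∧ w t = m}

/-- There is a chain of `k`-Bruhat covers from `u` to `w` whose left swap
positions `a_1, …, a_{s-1}` are pairwise distinct. -/
def DistinctLeftTo (k : ℤ) (u w : Equiv.Perm ℤ) : Prop :=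
  ∃ (m : ℕ) (us : ℕ → Equiv.Perm ℤ) (ab : ℕ → ℤ × ℤ),
    us 0 = u ∧ us m = w ∧
    (∀ i < m, (ab i).1 ≤ k ∧ k < (ab i).2 ∧
      us (i + 1) = us i * Equiv.swap (ab i).1 (ab i).2 ∧
      permLength (us (i + 1)) = permLength (us i) + 1) ∧
    (∀ i j : ℕ, i < j → j < m → (ab i).1 ≠ (ab j).1)

namespace Stmt11Aux

open Equiv

open Equiv

def Inv (σ : Equiv.Perm ℤ) : Set (ℤ × ℤ) := {p : ℤ × ℤ | p.1 < p.2 ∧ σ p.2 < σ p.1}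

lemma permLength_eq (σ : Perm ℤ) : permLength σ = (Inv σ).ncard := rfl

lemma supp_apply {σ : Perm ℤ} {x : ℤ} (h : σ x ≠ x) : σ (σ x) ≠ σ x :=
  fun h' => h (σ.injective h')

lemma inv_bounded {σ : Perm ℤ} {lo hi : ℤ} (h : ∀ x, σ x ≠ x → lo ≤ x ∧ x ≤ hi) :
    Inv σ ⊆ {p : ℤ × ℤ | lo ≤ p.1 ∧ p.1 < p.2 ∧ p.2 ≤ hi} := by
  rintro ⟨p, q⟩ ⟨hpq, hinv⟩
  simp only [Set.mem_setOf_eq]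
  by_cases hp : σ p = p
  · by_cases hq : σ q = q
    · exfalso; rw [hp, hq] at hinv; omega
    · have h1 := h q hq
      have h2 := h _ (supp_apply hq)
      simp only at hpq hinv ⊢
      omega
  · have h1 := h p hp
    have h2 := h _ (supp_apply hp)
    by_cases hq : σ q = q
    · simp only at hpq hinv ⊢; omega
    · have h3 := h q hq
      simp only at hpq hinv ⊢; omega

lemma inv_finite {σ : Perm ℤ} (h : FinSupp σ) : (Inv σ).Finite := by
  obtain ⟨hi, hhi⟩ := h.bddAbove
  obtain ⟨lo, hlo⟩ := h.bddBelow
  have hb : ∀ x, σ x ≠ x → lo ≤ x ∧ x ≤ hi := fun x hx => ⟨hlo hx, hhi hx⟩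
  refine Set.Finite.subset ((Set.finite_Icc lo hi).prod (Set.finite_Icc lo hi)) ?_
  intro p hp
  have := inv_bounded hb hp
  simp only [Set.mem_setOf_eq] at this
  exact ⟨Set.mem_Icc.2 ⟨this.1, le_trans (le_of_lt this.2.1) this.2.2⟩,
    Set.mem_Icc.2 ⟨le_trans this.1 (le_of_lt this.2.1), this.2.2⟩⟩

lemma finSupp_mul_swap {σ : Perm ℤ} (h : FinSupp σ) (a b : ℤ) :
    FinSupp (σ * Equiv.swap a b) := by
  refine Set.Finite.subset (h.union ((Set.finite_singleton a).union (Set.finite_singleton b))) ?_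
  intro x hx
  simp only [Set.mem_setOf_eq, Perm.mul_apply] at hx
  by_cases hxa : x = a
  · simp [hxa]
  by_cases hxb : x = b
  · simp [hxb]
  · left
    rw [Equiv.swap_apply_of_ne_of_ne hxa hxb] at hx
    exact hx


lemma length_lt_of_swap {σ : Perm ℤ} (hσ : FinSupp σ) {i j : ℤ} (hij : i < j)
    (hv : σ i < σ j) : permLength σ + 1 ≤ permLength (σ * Equiv.swap i j) := by
  set τ := Equiv.swap i j with hτ
  have hτa : ∀ x : ℤ, τ x = if x = i then j else if x = j then i else x := by
    intro x; rw [hτ, Equiv.swap_apply_def]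
  have hττ : ∀ x : ℤ, τ (τ x) = x := fun x => Equiv.swap_apply_self i j x
  have hmul : ∀ (x : ℤ), (σ * τ) x = σ (τ x) := fun x => rfl
  set Rs : Set (ℤ × ℤ) :=
    {p : ℤ × ℤ | p.1 < p.2 ∧ (p.1 = i ∧ p.2 ≤ j ∨ p.2 = j ∧ i ≤ p.1)} with hRs
  -- s1 : characterization of Rs
  have s1 : ∀ p : ℤ × ℤ, p.1 < p.2 → (p ∈ Rs ↔ τ p.2 < τ p.1) := by
    rintro ⟨x, y⟩ hxy
    simp only at hxy
    have ex := hτa x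
    have ey := hτa y
    simp only [hRs, Set.mem_setOf_eq]
    constructor
    · rintro ⟨-, h⟩
      split_ifs at ex ey <;> omega
    · intro h
      refine ⟨hxy, ?_⟩
      split_ifs at ex ey <;> omega
  have hfin1 : (Inv σ).Finite := inv_finite hσ
  have hfin2 : (Inv (σ * τ)).Finite := inv_finite (finSupp_mul_swap hσ i j)
  set F : ℤ × ℤ → ℤ × ℤ := fun p => if τ p.1 < τ p.2 then (τ p.1, τ p.2) else (τ p.2, τ p.1)
    with hF
  have hFs : ∀ x y : ℤ, τ x < τ y → F (x, y) = (τ x, τ y) := by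
    intro x y h
    simp only [hF]
    rw [if_pos h]
  have hFr : ∀ x y : ℤ, ¬ τ x < τ y → F (x, y) = (τ y, τ x) := by
    intro x y h
    simp only [hF]
    rw [if_neg h]
  have hFF : ∀ p : ℤ × ℤ, p.1 < p.2 → F (F p) = p := by
    rintro ⟨x, y⟩ hxy
    simp only at hxy
    by_cases h : τ x < τ y
    · rw [hFs x y h, hFs (τ x) (τ y) (by rw [hττ x, hττ y]; exact hxy), hττ, hττ]
    · rw [hFr x y h, hFr (τ y) (τ x) (by rw [hττ x, hττ y]; omega), hττ, hττ]
  -- Claim 1 : Inv (σ τ) \ Rs = F '' (Inv σ \ Rs)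
  have claim1 : Inv (σ * τ) \ Rs = F '' (Inv σ \ Rs) := by
    ext q
    constructor
    · rintro ⟨⟨hq12, hqinv⟩, hqRs⟩
      have hqs : τ q.1 < τ q.2 := by
        rcases lt_trichotomy (τ q.1) (τ q.2) with h' | h' | h'
        · exact h'
        · exact absurd (τ.injective h') (by omega)
        · exact absurd ((s1 q hq12).2 h') hqRs
      refine ⟨(τ q.1, τ q.2), ⟨⟨hqs, ?_⟩, ?_⟩, ?_⟩
      · simpa only [hττ, hmul] using hqinv
      · intro hmem
        have := (s1 _ hqs).1 hmem
        simp only [hττ] at this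
        omega
      · simp only [hF, hττ, if_pos hq12]
    · rintro ⟨p, ⟨⟨hp12, hpinv⟩, hpRs⟩, rfl⟩
      have hps : τ p.1 < τ p.2 := by
        rcases lt_trichotomy (τ p.1) (τ p.2) with h' | h' | h'
        · exact h'
        · exact absurd (τ.injective h') (by omega)
        · exact absurd ((s1 p hp12).2 h') hpRs
      simp only [hF, if_pos hps]
      refine ⟨⟨hps, ?_⟩, ?_⟩
      · simpa only [hmul, hττ] using hpinv
      · intro hmem
        have := (s1 _ hps).1 hmem
        simp only [hττ] at this
        omega
  -- Claim 2
  have hijInv : ((i, j) : ℤ × ℤ) ∈ Inv (σ * τ) := by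
    refine ⟨hij, ?_⟩
    simp only [hmul, hτ]
    rw [Perm.mul_apply, Perm.mul_apply, Equiv.swap_apply_left, Equiv.swap_apply_right]
    exact hv
  have claim2 : insert ((i, j) : ℤ × ℤ) (Inv σ ∩ Rs) ⊆ Inv (σ * τ) ∩ Rs := by
    rintro p (rfl | ⟨⟨hp12, hpinv⟩, hpRs⟩)
    · exact ⟨hijInv, ⟨hij, Or.inl ⟨rfl, le_refl j⟩⟩⟩
    · refine ⟨⟨hp12, ?_⟩, hpRs⟩
      obtain ⟨-, hcase⟩ := hpRs
      simp only [hmul]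
      rcases hcase with ⟨h1, h2⟩ | ⟨h1, h2⟩
      · -- p.1 = i, p.2 ≤ j
        rcases eq_or_lt_of_le h2 with h3 | h3
        · exfalso; rw [h1, h3] at hpinv; omega
        · have e2 : τ p.2 = p.2 := by rw [hτa]; split_ifs <;> omega
          have e1 : τ p.1 = j := by rw [hτa]; split_ifs <;> omega
          have hv1 : σ p.1 = σ i := by rw [h1]
          rw [e1, e2]
          omega
      · rcases eq_or_lt_of_le h2 with h3 | h3
        · exfalso; rw [h1, ← h3] at hpinv; omega
        · have e1 : τ p.1 = p.1 := by rw [hτa]; split_ifs <;> omega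
          have e2 : τ p.2 = i := by rw [hτa]; split_ifs <;> omega
          have hv2 : σ p.2 = σ j := by rw [h1]
          rw [e1, e2]
          omega
  -- injectivity of F on sorted pairs
  have hFinj : Set.InjOn F (Inv σ \ Rs) := by
    rintro p ⟨⟨hp12, -⟩, -⟩ q ⟨⟨hq12, -⟩, -⟩ h
    have := congrArg F h
    rwa [hFF p hp12, hFF q hq12] at this
  -- cardinalities
  have hd1 : permLength (σ * τ) = (Inv (σ * τ) ∩ Rs).ncard + (Inv (σ * τ) \ Rs).ncard := by
    rw [permLength_eq, ← Set.ncard_inter_add_ncard_diff_eq_ncard (Inv (σ * τ)) Rs hfin2]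
  have hd2 : permLength σ = (Inv σ ∩ Rs).ncard + (Inv σ \ Rs).ncard := by
    rw [permLength_eq, ← Set.ncard_inter_add_ncard_diff_eq_ncard (Inv σ) Rs hfin1]
  have hB2 : (Inv (σ * τ) \ Rs).ncard = (Inv σ \ Rs).ncard := by
    rw [claim1, Set.ncard_image_of_injOn hFinj]
  have hnotin : ((i, j) : ℤ × ℤ) ∉ Inv σ ∩ Rs := by
    rintro ⟨⟨-, h⟩, -⟩; simp only at h; omega
  have hB1 : (Inv σ ∩ Rs).ncard + 1 ≤ (Inv (σ * τ) ∩ Rs).ncard := by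
    have h1 : (insert ((i, j) : ℤ × ℤ) (Inv σ ∩ Rs)).ncard = (Inv σ ∩ Rs).ncard + 1 :=
      Set.ncard_insert_of_notMem hnotin (hfin1.inter_of_left Rs)
    have h2 : (insert ((i, j) : ℤ × ℤ) (Inv σ ∩ Rs)).ncard ≤ (Inv (σ * τ) ∩ Rs).ncard :=
      Set.ncard_le_ncard claim2 (hfin2.inter_of_left Rs)
    omega
  omega

lemma cover_values {σ : Perm ℤ} (hσ : FinSupp σ) {a b : ℤ} (hab : a < b)
    (hlen : permLength (σ * Equiv.swap a b) = permLength σ + 1) : σ a < σ b := by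
  rcases lt_trichotomy (σ a) (σ b) with h | h | h
  · exact h
  · exact absurd (σ.injective h) (by omega)
  · exfalso
    have h1 : (σ * Equiv.swap a b) a < (σ * Equiv.swap a b) b := by
      have e1 : (σ * Equiv.swap a b) a = σ b := by
        simp [Perm.mul_apply, Equiv.swap_apply_left]
      have e2 : (σ * Equiv.swap a b) b = σ a := by
        simp [Perm.mul_apply, Equiv.swap_apply_right]
      omega
    have h2 := length_lt_of_swap (finSupp_mul_swap hσ a b) hab h1
    rw [Equiv.mul_swap_mul_self] at h2
    omega

def IsChain (k : ℤ) (m : ℕ) (us : ℕ → Perm ℤ) (ab : ℕ → ℤ × ℤ) : Prop :=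
  ∀ i < m, (ab i).1 ≤ k ∧ k < (ab i).2 ∧
    us (i + 1) = us i * Equiv.swap (ab i).1 (ab i).2 ∧
    permLength (us (i + 1)) = permLength (us i) + 1

lemma chain_finsupp {k m us ab} (hc : IsChain k m us ab) (h0 : FinSupp (us 0)) :
    ∀ i, i ≤ m → FinSupp (us i) := by
  intro i
  induction i with
  | zero => intro _; exact h0
  | succ i ih =>
    intro hi
    have h1 := ih (by omega)
    rw [(hc i (by omega)).2.2.1]
    exact finSupp_mul_swap h1 _ _

lemma chain_cover_lt {k m us ab} (hc : IsChain k m us ab) (h0 : FinSupp (us 0))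
    {i : ℕ} (hi : i < m) : us i (ab i).1 < us i (ab i).2 := by
  obtain ⟨h1, h2, h3, h4⟩ := hc i hi
  rw [h3] at h4
  exact cover_values (chain_finsupp hc h0 i (by omega)) (by omega) h4

lemma chain_step_apply {k m us ab} (hc : IsChain k m us ab) {i : ℕ} (hi : i < m) (x : ℤ) :
    us (i + 1) x = us i (Equiv.swap (ab i).1 (ab i).2 x) := by
  rw [(hc i hi).2.2.1]; rfl

-- value at a low position never decreases; at a high position never increases
lemma chain_low_mono {k m us ab} (hc : IsChain k m us ab) (h0 : FinSupp (us 0))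
    (hk : 0 ≤ k) {p : ℤ} (hp : p < 1) :
    ∀ i j : ℕ, i ≤ j → j ≤ m → us i p ≤ us j p := by
  intro i j hij hjm
  induction j with
  | zero => have : i = 0 := by omega
            rw [this]
  | succ j ih =>
    rcases Nat.lt_or_ge i (j+1) with h | h
    · have h1 : us i p ≤ us j p := ih (by omega) (by omega)
      have hstep := chain_step_apply hc (i := j) (by omega) p
      by_cases hpa : p = (ab j).1
      · rw [hstep, hpa, Equiv.swap_apply_left]
        have hlt := chain_cover_lt hc h0 (i := j) (by omega)
        rw [hpa] at h1
        omega
      · have hpb : p ≠ (ab j).2 := by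
          have := (hc j (by omega)).2.1
          omega
        rw [hstep, Equiv.swap_apply_of_ne_of_ne hpa hpb]
        omega
    · have : i = j + 1 := by omega
      rw [this]

lemma chain_high_mono {k m us ab} (hc : IsChain k m us ab) (h0 : FinSupp (us 0))
    {n : ℤ} (hk : k < n) {p : ℤ} (hp : n < p) :
    ∀ i j : ℕ, i ≤ j → j ≤ m → us j p ≤ us i p := by
  intro i j hij hjm
  induction j with
  | zero => have : i = 0 := by omega
            rw [this]
  | succ j ih =>
    rcases Nat.lt_or_ge i (j+1) with h | h
    · have h1 : us j p ≤ us i p := ih (by omega) (by omega)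
      have hstep := chain_step_apply hc (i := j) (by omega) p
      by_cases hpb : p = (ab j).2
      · rw [hstep, hpb, Equiv.swap_apply_right]
        have hlt := chain_cover_lt hc h0 (i := j) (by omega)
        rw [hpb] at h1
        omega
      · have hpa : p ≠ (ab j).1 := by
          have := (hc j (by omega)).1
          omega
        rw [hstep, Equiv.swap_apply_of_ne_of_ne hpa hpb]
        omega
    · have : i = j + 1 := by omega
      rw [this]

lemma chain_bounds {n k : ℤ} {m us ab} (hc : IsChain k m us ab) (h0 : FinSupp (us 0))
    (hu : InS 1 n (us 0)) (hw : InS 1 n (us m)) (hk0 : 0 ≤ k) (hkn : k < n) :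
    (∀ i, i ≤ m → InS 1 n (us i)) ∧ ∀ i, i < m → 1 ≤ (ab i).1 ∧ (ab i).2 ≤ n := by
  have low : ∀ p : ℤ, p < 1 → ∀ i, i ≤ m → us i p = p := by
    intro p hp i him
    have h1 : us 0 p = p := by
      by_contra hne
      have := hu p hne
      omega
    have h2 : us m p = p := by
      by_contra hne
      have := hw p hne
      omega
    have h4 := chain_low_mono hc h0 hk0 hp 0 i (Nat.zero_le i) him
    have h5 := chain_low_mono hc h0 hk0 hp i m him (le_refl m)
    omega
  have high : ∀ p : ℤ, n < p → ∀ i, i ≤ m → us i p = p := by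
    intro p hp i him
    have h1 : us 0 p = p := by
      by_contra hne
      have := hu p hne
      omega
    have h2 : us m p = p := by
      by_contra hne
      have := hw p hne
      omega
    have h4 := chain_high_mono hc h0 hkn hp 0 i (Nat.zero_le i) him
    have h5 := chain_high_mono hc h0 hkn hp i m him (le_refl m)
    omega
  constructor
  · intro i him q hq
    constructor
    · by_contra hcon
      push_neg at hcon
      exact hq (low q (by omega) i him)
    · by_contra hcon
      push_neg at hcon
      exact hq (high q (by omega) i him)
  · intro i him
    constructor
    · by_contra hcon
      push_neg at hcon
      have hp : (ab i).1 < 1 := by omega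
      have hstep := chain_step_apply hc him (ab i).1
      rw [Equiv.swap_apply_left] at hstep
      have hlt := chain_cover_lt hc h0 him
      have e1 := low _ hp i (by omega)
      have e2 := low _ hp (i+1) (by omega)
      omega
    · by_contra hcon
      push_neg at hcon
      have hp : n < (ab i).2 := by omega
      have hstep := chain_step_apply hc him (ab i).2
      rw [Equiv.swap_apply_right] at hstep
      have hlt := chain_cover_lt hc h0 him
      have e1 := high _ hp i (by omega)
      have e2 := high _ hp (i+1) (by omega)
      omega

lemma distinct_right_of_inc {k m us ab} (hc : IsChain k m us ab) (h0 : FinSupp (us 0))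
    (hinc : ∀ i j : ℕ, i < j → j < m → us i (ab i).1 < us j (ab j).1) :
    ∀ i j : ℕ, i < j → j < m → (ab i).2 ≠ (ab j).2 := by
  intro i j hij hjm heq
  have key : ∀ s : ℕ, i + 1 ≤ s → s ≤ j → us s (ab i).2 ≤ us (i + 1) (ab i).2 := by
    intro s
    induction s with
    | zero => omega
    | succ s ih =>
      intro h1 h2
      rcases Nat.lt_or_ge s (i + 1) with h | h
      · have he : s + 1 = i + 1 := by omega
        rw [he]
      · have hs : us s (ab i).2 ≤ us (i + 1) (ab i).2 := ih h (by omega)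
        have hsm : s < m := by omega
        have hstep := chain_step_apply hc hsm (ab i).2
        by_cases hb2 : (ab i).2 = (ab s).2
        · have hrw : Equiv.swap (ab s).1 (ab s).2 (ab i).2 = (ab s).1 := by
            rw [hb2]; exact Equiv.swap_apply_right _ _
          rw [hstep, hrw]
          have hlt := chain_cover_lt hc h0 hsm
          rw [← hb2] at hlt
          omega
        · have hb1 : (ab i).2 ≠ (ab s).1 := by
            have q1 := (hc s hsm).1
            have q2 := (hc i (by omega)).2.1
            omega
          rw [hstep, Equiv.swap_apply_of_ne_of_ne hb1 hb2]
          exact hs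
  have h1 : us (i + 1) (ab i).2 = us i (ab i).1 := by
    rw [chain_step_apply hc (by omega) (ab i).2, Equiv.swap_apply_right]
  have h2 : us j (ab j).1 < us j (ab i).2 := by
    have h3 := chain_cover_lt hc h0 hjm
    rw [← heq] at h3
    exact h3
  have h3 := key j (by omega) (le_refl j)
  have h4 := hinc i j hij hjm
  omega

lemma swap_comm_of_disjoint {a b c d : ℤ} (h1 : a ≠ c) (h2 : a ≠ d) (h3 : b ≠ c) (h4 : b ≠ d) :
    Equiv.swap a b * Equiv.swap c d = Equiv.swap c d * Equiv.swap a b := by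
  ext x
  simp only [Equiv.Perm.mul_apply, Equiv.swap_apply_def]
  split_ifs <;> omega

open Classical in
noncomputable def badSet (m : ℕ) (us : ℕ → Perm ℤ) (ab : ℕ → ℤ × ℤ) : Finset (ℕ × ℕ) :=
  (Finset.range m ×ˢ Finset.range m).filter
    (fun p => p.1 < p.2 ∧ us p.2 (ab p.2).1 ≤ us p.1 (ab p.1).1)

lemma mem_badSet {m : ℕ} {us : ℕ → Perm ℤ} {ab : ℕ → ℤ × ℤ} {p : ℕ × ℕ} :
    p ∈ badSet m us ab ↔ p.1 < p.2 ∧ p.2 < m ∧ us p.2 (ab p.2).1 ≤ us p.1 (ab p.1).1 := by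
  simp only [badSet, Finset.mem_filter, Finset.mem_product, Finset.mem_range]
  constructor
  · rintro ⟨⟨h1, h2⟩, h3, h4⟩
    exact ⟨h3, h2, h4⟩
  · rintro ⟨h1, h2, h3⟩
    exact ⟨⟨by omega, h2⟩, h1, h3⟩

lemma sort_chain_aux (N : ℕ) : ∀ (k : ℤ) (m : ℕ) (us : ℕ → Perm ℤ) (ab : ℕ → ℤ × ℤ),
    IsChain k m us ab → FinSupp (us 0) →
    (∀ i j : ℕ, i < m → j < m → i ≠ j → (ab i).2 ≠ (ab j).2) →
    (badSet m us ab).card = N →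
    ∃ (us' : ℕ → Perm ℤ) (ab' : ℕ → ℤ × ℤ), us' 0 = us 0 ∧ us' m = us m ∧
      IsChain k m us' ab' ∧
      (∀ i j : ℕ, i < j → j < m → us' i (ab' i).1 < us' j (ab' j).1) := by
  induction N using Nat.strong_induction_on with
  | _ N ih =>
  intro k m us ab hc h0 hdist hcard
  rcases Nat.eq_zero_or_pos N with hN | hN
  · -- already increasing
    refine ⟨us, ab, rfl, rfl, hc, ?_⟩
    intro i j hij hjm
    have hempty : badSet m us ab = ∅ := Finset.card_eq_zero.mp (by omega)
    have : (i, j) ∉ badSet m us ab := by rw [hempty]; exact Finset.notMem_empty _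
    rw [mem_badSet] at this
    simp only [not_and, not_le] at this
    exact this hij hjm
  · -- there is a bad pair; find an adjacent one
    obtain ⟨⟨i0, j0⟩, hmem⟩ := Finset.card_pos.mp (by omega : 0 < (badSet m us ab).card)
    rw [mem_badSet] at hmem
    simp only at hmem
    have hadj : ∃ t, t + 1 < m ∧ us (t + 1) (ab (t + 1)).1 ≤ us t (ab t).1 := by
      by_contra hno
      push_neg at hno
      have mono : ∀ i j : ℕ, i < j → j < m → us i (ab i).1 < us j (ab j).1 := by
        intro i j hij hjm
        induction j with
        | zero => omega
        | succ j ihj =>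
          rcases Nat.lt_or_ge i j with h | h
          · exact lt_trans (ihj h (by omega)) (hno j (by omega))
          · have he : i = j := by omega
            rw [he]
            exact hno j (by omega)
      have := mono i0 j0 hmem.1 hmem.2.1
      omega
    obtain ⟨t, htm, hbad⟩ := hadj
    have ht : t < m := by omega
    obtain ⟨hak, hkb, hstep1, hlen1⟩ := hc t ht
    obtain ⟨hck, hkd, hstep2, hlen2⟩ := hc (t + 1) htm
    have hvab : us t (ab t).1 < us t (ab t).2 := chain_cover_lt hc h0 ht
    have hxcd : us (t + 1) (ab (t + 1)).1 < us (t + 1) (ab (t + 1)).2 :=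
      chain_cover_lt hc h0 htm
    have hca : (ab (t + 1)).1 ≠ (ab t).1 := by
      intro h
      have : us (t + 1) (ab (t + 1)).1 = us t (ab t).2 := by
        rw [h, chain_step_apply hc ht, Equiv.swap_apply_left]
      omega
    have hdb : (ab (t + 1)).2 ≠ (ab t).2 := hdist (t + 1) t htm ht (by omega)
    have hcb : (ab (t + 1)).1 ≠ (ab t).2 := by omega
    have hda : (ab (t + 1)).2 ≠ (ab t).1 := by omega
    have hvc : us (t + 1) (ab (t + 1)).1 = us t (ab (t + 1)).1 := by
      rw [chain_step_apply hc ht, Equiv.swap_apply_of_ne_of_ne hca hcb]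
    have hvd : us (t + 1) (ab (t + 1)).2 = us t (ab (t + 1)).2 := by
      rw [chain_step_apply hc ht, Equiv.swap_apply_of_ne_of_ne hda hdb]
    have hstrict : us (t + 1) (ab (t + 1)).1 < us t (ab t).1 := by
      have hne : us t (ab (t + 1)).1 ≠ us t (ab t).1 := fun h => hca ((us t).injective h)
      omega
    set z : Perm ℤ := us t * Equiv.swap (ab (t + 1)).1 (ab (t + 1)).2 with hz
    have hfs_t : FinSupp (us t) := chain_finsupp hc h0 t (le_of_lt ht)
    have hfs_z : FinSupp z := finSupp_mul_swap hfs_t _ _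
    have lz_ge : permLength (us t) + 1 ≤ permLength z :=
      length_lt_of_swap hfs_t (by omega) (by omega)
    have hyz : us (t + 1 + 1) = z * Equiv.swap (ab t).1 (ab t).2 := by
      rw [hstep2, hstep1, mul_assoc,
        swap_comm_of_disjoint hca.symm hda.symm hcb.symm hdb.symm, hz, ← mul_assoc]
    have hza : z (ab t).1 = us t (ab t).1 := by
      rw [hz]
      show us t (Equiv.swap (ab (t + 1)).1 (ab (t + 1)).2 (ab t).1) = _
      rw [Equiv.swap_apply_of_ne_of_ne hca.symm hda.symm]
    have hzb : z (ab t).2 = us t (ab t).2 := by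
      rw [hz]
      show us t (Equiv.swap (ab (t + 1)).1 (ab (t + 1)).2 (ab t).2) = _
      rw [Equiv.swap_apply_of_ne_of_ne hcb.symm hdb.symm]
    have ly_ge : permLength z + 1 ≤ permLength (us (t + 1 + 1)) := by
      rw [hyz]
      exact length_lt_of_swap hfs_z (by omega) (by omega)
    have hlen2' : permLength (us (t + 1 + 1)) = permLength (us t) + 2 := by
      omega
    have lz : permLength z = permLength (us t) + 1 := by omega
    have ly : permLength (us (t + 1 + 1)) = permLength z + 1 := by omega
    -- the exchanged chain
    set e : ℕ → ℕ := fun s => if s = t then t + 1 else if s = t + 1 then t else s with he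
    have hee : ∀ s, e (e s) = s := by
      intro s
      simp only [he]
      split_ifs <;> omega
    have he_lt : ∀ s, s < m → e s < m := by
      intro s hs
      simp only [he]
      split_ifs <;> omega
    have e_t : e t = t + 1 := by simp only [he]; split_ifs <;> omega
    have e_t1 : e (t + 1) = t := by simp only [he]; split_ifs <;> omega
    have e_o : ∀ s, s ≠ t → s ≠ t + 1 → e s = s := by
      intro s h1 h2
      simp only [he]
      split_ifs <;> omega
    set us' : ℕ → Perm ℤ := Function.update us (t + 1) z with hus'
    set ab' : ℕ → ℤ × ℤ := fun s => ab (e s) with hab'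
    have hus'_ne : ∀ s, s ≠ t + 1 → us' s = us s := by
      intro s hs
      rw [hus']
      exact Function.update_of_ne hs _ _
    have hus'_eq : us' (t + 1) = z := by
      rw [hus']
      exact Function.update_self _ _ _
    have hab't : ab' t = ab (t + 1) := by
      show ab (e t) = ab (t + 1)
      rw [e_t]
    have hab't1 : ab' (t + 1) = ab t := by
      show ab (e (t + 1)) = ab t
      rw [e_t1]
    have hab'o : ∀ s, s ≠ t → s ≠ t + 1 → ab' s = ab s := by
      intro s h1 h2
      show ab (e s) = ab s
      rw [e_o s h1 h2]
    have hc' : IsChain k m us' ab' := by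
      intro s hs
      by_cases hst : s = t
      · rw [hst, hab't, hus'_eq, hus'_ne t (by omega)]
        exact ⟨hck, hkd, by rw [hz], lz⟩
      by_cases hst1 : s = t + 1
      · rw [hst1, hab't1, hus'_eq, hus'_ne (t + 1 + 1) (by omega)]
        exact ⟨hak, hkb, by rw [← hyz], ly⟩
      · rw [hab'o s hst hst1, hus'_ne s hst1, hus'_ne (s + 1) (by omega)]
        exact hc s hs
    have h0' : FinSupp (us' 0) := by
      rw [hus'_ne 0 (by omega)]
      exact h0
    have hdist' : ∀ i j : ℕ, i < m → j < m → i ≠ j → (ab' i).2 ≠ (ab' j).2 := by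
      intro i j hi hj hij
      simp only [hab']
      refine hdist (e i) (e j) (he_lt i hi) (he_lt j hj) ?_
      intro h
      have := congrArg e h
      rw [hee, hee] at this
      exact hij this
    -- values of the new chain
    have hval : ∀ s, us' s (ab' s).1 = us (e s) (ab (e s)).1 := by
      intro s
      by_cases hst : s = t
      · rw [hst, hab't, hus'_ne t (by omega), e_t, ← hvc]
      by_cases hst1 : s = t + 1
      · rw [hst1, hab't1, hus'_eq, e_t1, hza]
      · rw [hab'o s hst hst1, hus'_ne s hst1, e_o s hst hst1]
    -- the bad set shrinks
    have hmem_tt : (t, t + 1) ∈ badSet m us ab := mem_badSet.mpr ⟨by omega, htm, hbad⟩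
    have hord : ∀ p q : ℕ, p < q → ¬(p = t ∧ q = t + 1) → e p < e q := by
      intro p q h1 h2
      simp only [he]
      split_ifs <;> omega
    have hcard' : (badSet m us' ab').card = (badSet m us ab).card - 1 := by
      have : (badSet m us' ab').card = ((badSet m us ab).erase (t, t + 1)).card := by
        refine Finset.card_nbij' (fun p => (e p.1, e p.2)) (fun p => (e p.1, e p.2)) ?_ ?_ ?_ ?_
        · rintro ⟨i, j⟩ hij
          rw [Finset.mem_coe, mem_badSet] at hij
          obtain ⟨h1, h2, h3⟩ := hij
          simp only at h1 h2 h3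
          dsimp only
          rw [hval i, hval j] at h3
          have hnot : ¬(i = t ∧ j = t + 1) := by
            rintro ⟨rfl, rfl⟩
            rw [e_t, e_t1] at h3
            omega
          have hlt := hord i j h1 hnot
          rw [Finset.mem_coe, Finset.mem_erase]
          constructor
          · intro hcon
            rw [Prod.mk.injEq] at hcon
            have hi' : i = e (e i) := (hee i).symm
            have hj' : j = e (e j) := (hee j).symm
            rw [hcon.1, e_t] at hi'
            rw [hcon.2, e_t1] at hj'
            omega
          · rw [mem_badSet]
            exact ⟨hlt, he_lt j h2, h3⟩
        · rintro ⟨i, j⟩ hij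
          rw [Finset.mem_coe, Finset.mem_erase, mem_badSet] at hij
          obtain ⟨hne, h1, h2, h3⟩ := hij
          simp only at h1 h2 h3
          dsimp only
          have hnot : ¬(i = t ∧ j = t + 1) := by
            rintro ⟨rfl, rfl⟩
            exact hne rfl
          have hlt := hord i j h1 hnot
          rw [Finset.mem_coe, mem_badSet]
          refine ⟨hlt, he_lt j h2, ?_⟩
          rw [hval (e i), hval (e j), hee, hee]
          exact h3
        · rintro ⟨i, j⟩ _
          dsimp only
          rw [hee, hee]
        · rintro ⟨i, j⟩ _
          dsimp only
          rw [hee, hee]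
      rw [this, Finset.card_erase_of_mem hmem_tt]
    have hlt : (badSet m us' ab').card < N := by omega
    obtain ⟨us'', ab'', g0, gm, gchain, ginc⟩ :=
      ih _ hlt k m us' ab' hc' h0' hdist' rfl
    refine ⟨us'', ab'', ?_, ?_, gchain, ginc⟩
    · rw [g0, hus'_ne 0 (by omega)]
    · rw [gm, hus'_ne m (by omega)]

lemma InS_mul {n : ℤ} {σ ρ : Perm ℤ} (hσ : InS 1 n σ) (hρ : InS 1 n ρ) :
    InS 1 n (σ * ρ) := by
  intro x hx
  by_cases h : ρ x = x
  · apply hσ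
    rwa [Perm.mul_apply, h] at hx
  · exact hρ x h

lemma finSupp_of_InS {n : ℤ} {σ : Perm ℤ} (hσ : InS 1 n σ) : FinSupp σ :=
  Set.Finite.subset (Set.finite_Icc 1 n) (fun x hx => Set.mem_Icc.2 (hσ x hx))

def Box (n : ℤ) : Set (ℤ × ℤ) := {p : ℤ × ℤ | 1 ≤ p.1 ∧ p.1 < p.2 ∧ p.2 ≤ n}

lemma box_finite (n : ℤ) : (Box n).Finite := by
  refine Set.Finite.subset ((Set.finite_Icc (1:ℤ) n).prod (Set.finite_Icc (1:ℤ) n)) ?_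
  rintro ⟨x, y⟩ ⟨h1, h2, h3⟩
  exact ⟨Set.mem_Icc.2 ⟨h1, by omega⟩, Set.mem_Icc.2 ⟨by omega, h3⟩⟩

lemma inv_sub_box {n : ℤ} {σ : Perm ℤ} (hσ : InS 1 n σ) : Inv σ ⊆ Box n :=
  inv_bounded hσ

section W0
variable {n : ℤ} {w0 : Perm ℤ}
  (hw0a : ∀ i : ℤ, 1 ≤ i → i ≤ n → w0 i = n + 1 - i)
  (hw0b : ∀ i : ℤ, i < 1 ∨ n < i → w0 i = i)

include hw0a hw0b

lemma len_w0 {σ : Perm ℤ} (hσ : InS 1 n σ) (hw0S : InS 1 n w0) :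
    permLength (σ * w0) + permLength σ = (Box n).ncard := by
  set Φ : ℤ × ℤ → ℤ × ℤ := fun q => (n + 1 - q.2, n + 1 - q.1) with hΦ
  have himg : Inv (σ * w0) = Φ '' (Box n \ Inv σ) := by
    ext p
    constructor
    · intro hp
      have hbox : p ∈ Box n := inv_sub_box (InS_mul hσ hw0S) hp
      obtain ⟨hb1, hb2, hb3⟩ := hbox
      obtain ⟨hp12, hpinv⟩ := hp
      have hv1 : (σ * w0) p.1 = σ (n + 1 - p.1) := by
        rw [Perm.mul_apply, hw0a p.1 hb1 (by omega)]
      have hv2 : (σ * w0) p.2 = σ (n + 1 - p.2) := by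
        rw [Perm.mul_apply, hw0a p.2 (by omega) hb3]
      refine ⟨(n + 1 - p.2, n + 1 - p.1), ⟨⟨by omega, by omega, by omega⟩, ?_⟩, ?_⟩
      · rintro ⟨-, hc⟩
        simp only at hc
        omega
      · simp only [hΦ]
        rw [Prod.ext_iff]
        constructor <;> simp only <;> omega
    · rintro ⟨q, ⟨⟨hq1, hq2, hq3⟩, hqni⟩, rfl⟩
      have hne : σ q.1 ≠ σ q.2 := fun h => (by omega : ¬(q.1 = q.2)) (σ.injective h)
      have hnlt : ¬ σ q.2 < σ q.1 := fun h => hqni ⟨hq2, h⟩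
      have hv1 : (σ * w0) (Φ q).2 = σ q.1 := by
        have e1 : w0 (n + 1 - q.1) = n + 1 - (n + 1 - q.1) := hw0a _ (by omega) (by omega)
        show σ (w0 (n + 1 - q.1)) = σ q.1
        rw [e1]
        exact congrArg σ (by omega)
      have hv2 : (σ * w0) (Φ q).1 = σ q.2 := by
        have e1 : w0 (n + 1 - q.2) = n + 1 - (n + 1 - q.2) := hw0a _ (by omega) (by omega)
        show σ (w0 (n + 1 - q.2)) = σ q.2
        rw [e1]
        exact congrArg σ (by omega)
      refine ⟨by show n + 1 - q.2 < n + 1 - q.1; omega, ?_⟩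
      rw [hv1, hv2]
      omega
  have hinj : Set.InjOn Φ (Box n \ Inv σ) := by
    rintro p - q - h
    rw [Prod.ext_iff] at h ⊢
    simp only [hΦ] at h
    obtain ⟨h1, h2⟩ := h
    constructor <;> omega
  have h1 : permLength (σ * w0) = (Box n \ Inv σ).ncard := by
    rw [permLength_eq, himg, Set.ncard_image_of_injOn hinj]
  have h2 : (Box n \ Inv σ).ncard = (Box n).ncard - (Inv σ).ncard :=
    Set.ncard_diff (inv_sub_box hσ) ((box_finite n).subset (inv_sub_box hσ))
  have h3 : (Inv σ).ncard ≤ (Box n).ncard :=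
    Set.ncard_le_ncard (inv_sub_box hσ) (box_finite n)
  rw [permLength_eq σ]
  omega

lemma transport (hw0invol : w0 * w0 = 1) (hw0S : InS 1 n w0)
    {k : ℤ} {m : ℕ} {us : ℕ → Perm ℤ} {ab : ℕ → ℤ × ℤ}
    (hc : IsChain k m us ab)
    (hIn : ∀ i, i ≤ m → InS 1 n (us i))
    (hbd : ∀ i, i < m → 1 ≤ (ab i).1 ∧ (ab i).2 ≤ n) :
    IsChain (n - k) m (fun i => us (m - i) * w0)
      (fun i => (n + 1 - (ab (m - 1 - i)).2, n + 1 - (ab (m - 1 - i)).1)) := by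
  have hw0inv : w0⁻¹ = w0 := by
    rw [inv_eq_iff_mul_eq_one, hw0invol]
  intro i him
  dsimp only
  have hs : m - 1 - i < m := by omega
  obtain ⟨hak, hkb, hstep, hlen⟩ := hc _ hs
  obtain ⟨ha1, hb1⟩ := hbd _ hs
  have e1 : m - (i + 1) = m - 1 - i := by omega
  have e2 : m - i = (m - 1 - i) + 1 := by omega
  refine ⟨by omega, by omega, ?_, ?_⟩
  · -- step equation
    have hswap : Equiv.swap (n + 1 - (ab (m - 1 - i)).1) (n + 1 - (ab (m - 1 - i)).2)
        = w0 * Equiv.swap (ab (m - 1 - i)).1 (ab (m - 1 - i)).2 * w0 := by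
      have h1 : w0 (ab (m - 1 - i)).1 = n + 1 - (ab (m - 1 - i)).1 :=
        hw0a _ ha1 (by omega)
      have h2 : w0 (ab (m - 1 - i)).2 = n + 1 - (ab (m - 1 - i)).2 :=
        hw0a _ (by omega) hb1
      rw [← h1, ← h2, Equiv.swap_apply_apply, hw0inv]
    rw [e1, e2, hstep,
      Equiv.swap_comm (n + 1 - (ab (m - 1 - i)).2) (n + 1 - (ab (m - 1 - i)).1), hswap]
    have key : us (m - 1 - i) * Equiv.swap (ab (m - 1 - i)).1 (ab (m - 1 - i)).2 * w0 *
          (w0 * Equiv.swap (ab (m - 1 - i)).1 (ab (m - 1 - i)).2 * w0)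
        = us (m - 1 - i) * (Equiv.swap (ab (m - 1 - i)).1 (ab (m - 1 - i)).2 *
            ((w0 * w0) * Equiv.swap (ab (m - 1 - i)).1 (ab (m - 1 - i)).2)) * w0 := by
      group
    rw [key, hw0invol, one_mul, Equiv.swap_mul_self, mul_one]
  · -- lengths
    have l1 := len_w0 hw0a hw0b (hIn (m - 1 - i) (by omega)) hw0S
    have l2 := len_w0 hw0a hw0b (hIn (m - 1 - i + 1) (by omega)) hw0S
    rw [e1, e2]
    omega

end W0

end Stmt11Aux

theorem stmt11 (n k : ℤ) (hk : 1 ≤ k) (hkn : k < n)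
    (u w w0 : Equiv.Perm ℤ) (hu : InS 1 n u) (hw : InS 1 n w)
    (hw0a : ∀ i : ℤ, 1 ≤ i → i ≤ n → w0 i = n + 1 - i)
    (hw0b : ∀ i : ℤ, i < 1 ∨ n < i → w0 i = i) :
    IncTo k u w ↔ DistinctLeftTo (n - k) (w * w0) (u * w0) := by
  classical
  have hw0invol : w0 * w0 = 1 := by
    ext x
    simp only [Equiv.Perm.mul_apply, Equiv.Perm.one_apply]
    by_cases hx : 1 ≤ x ∧ x ≤ n
    · rw [hw0a x hx.1 hx.2, hw0a (n + 1 - x) (by omega) (by omega)]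
      omega
    · rw [hw0b x (by omega), hw0b x (by omega)]
  have hw0S : InS 1 n w0 := by
    intro x hx
    by_contra h
    push_neg at h
    by_cases h1 : (1:ℤ) ≤ x
    · exact hx (hw0b x (Or.inr (h h1)))
    · exact hx (hw0b x (Or.inl (by omega)))
  constructor
  · rintro ⟨m, us, ab, h0, hm, hc, hinc⟩
    have hc' : Stmt11Aux.IsChain k m us ab := hc
    have h0f : FinSupp (us 0) := by
      rw [h0]
      exact Stmt11Aux.finSupp_of_InS hu
    obtain ⟨hIn, hbd⟩ := Stmt11Aux.chain_bounds hc' h0f (by rw [h0]; exact hu)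
      (by rw [hm]; exact hw) (by omega) hkn
    have hdb := Stmt11Aux.distinct_right_of_inc hc' h0f hinc
    have hdbs : ∀ i j : ℕ, i < m → j < m → i ≠ j → (ab i).2 ≠ (ab j).2 := by
      intro i j hi hj hij
      rcases Nat.lt_or_ge i j with h | h
      · exact hdb i j h hj
      · exact (hdb j i (by omega) hi).symm
    have ht := Stmt11Aux.transport hw0a hw0b hw0invol hw0S hc' hIn hbd
    refine ⟨m, fun i => us (m - i) * w0,
      fun i => (n + 1 - (ab (m - 1 - i)).2, n + 1 - (ab (m - 1 - i)).1), ?_, ?_, ht, ?_⟩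
    · show us (m - 0) * w0 = w * w0
      rw [Nat.sub_zero, hm]
    · show us (m - m) * w0 = u * w0
      rw [Nat.sub_self, h0]
    · intro i j hij hjm
      dsimp only
      have h1 : m - 1 - i ≠ m - 1 - j := by omega
      have h2 := hdbs (m - 1 - i) (m - 1 - j) (by omega) (by omega) h1
      omega
  · rintro ⟨m, us, ab, h0, hm, hc, hd⟩
    have hc' : Stmt11Aux.IsChain (n - k) m us ab := hc
    have huw : InS 1 n (u * w0) := Stmt11Aux.InS_mul hu hw0S
    have hww : InS 1 n (w * w0) := Stmt11Aux.InS_mul hw hw0S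
    have h0f : FinSupp (us 0) := by
      rw [h0]
      exact Stmt11Aux.finSupp_of_InS hww
    obtain ⟨hIn, hbd⟩ := Stmt11Aux.chain_bounds hc' h0f (by rw [h0]; exact hww)
      (by rw [hm]; exact huw) (by omega) (by omega)
    have ht := Stmt11Aux.transport hw0a hw0b hw0invol hw0S hc' hIn hbd
    have hk' : n - (n - k) = k := by ring
    rw [hk'] at ht
    have he0 : us m * w0 = u := by
      rw [hm, mul_assoc, hw0invol, mul_one]
    have hem : us 0 * w0 = w := by
      rw [h0, mul_assoc, hw0invol, mul_one]
    have hds : ∀ i j : ℕ, i < m → j < m → i ≠ j → (ab i).1 ≠ (ab j).1 := by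
      intro i j hi hj hij
      rcases Nat.lt_or_ge i j with h | h
      · exact hd i j h hj
      · exact (hd j i (by omega) hi).symm
    have hdr : ∀ i j : ℕ, i < m → j < m → i ≠ j →
        ((fun i => (n + 1 - (ab (m - 1 - i)).2, n + 1 - (ab (m - 1 - i)).1)) i).2 ≠
        ((fun i => (n + 1 - (ab (m - 1 - i)).2, n + 1 - (ab (m - 1 - i)).1)) j).2 := by
      intro i j hi hj hij
      dsimp only
      have h1 : m - 1 - i ≠ m - 1 - j := by omega
      have h2 := hds (m - 1 - i) (m - 1 - j) (by omega) (by omega) h1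
      omega
    have h0f' : FinSupp ((fun i => us (m - i) * w0) 0) := by
      show FinSupp (us (m - 0) * w0)
      rw [Nat.sub_zero, he0]
      exact Stmt11Aux.finSupp_of_InS hu
    obtain ⟨us2, ab2, g0, gm, gchain, ginc⟩ :=
      Stmt11Aux.sort_chain_aux _ k m _ _ ht h0f' hdr rfl
    refine ⟨m, us2, ab2, ?_, ?_, gchain, ginc⟩
    · rw [g0]
      show us (m - 0) * w0 = u
      rw [Nat.sub_zero, he0]
    · rw [gm]
      show us (m - m) * w0 = w
      rw [Nat.sub_self, hem]
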